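/- arXiv:1311.5656 — 2 statements merged into one kernel-verified Lean document; each statement's English description precedes it below -/
import Mathlib

section
/- Let X_1,...,X_k and S be linearly independent vectors in R^{n+3} with Gram determinant Δ(X,S) < 0 for the Lie form B, and with B(S,S) < 0. Then every nonzero vector X in span(X_1,...,X_k,S) ∩ S^⊥ satisfies B(X,X) > 0, and span(X_1,...,X_k,S) = (span(X_1,...,X_k,S) ∩ S^⊥) ⊕ span(S). -/
/-- The Lie form on ℝ^{n+3}: a symmetric bilinear form of signature (n+1, 2). -/
noncomputable def lieForm (n : ℕ) : LinearMap.BilinForm ℝ (Fin (n + 3) → ℝ) :=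
  Matrix.toBilin' (Matrix.diagonal fun i => if (i : ℕ) < n + 1 then 1 else -1)

namespace Stmt11Aux
open Matrix


lemma lieForm_apply (n : ℕ) (x y : Fin (n + 3) → ℝ) :
    lieForm n x y = ∑ i : Fin (n + 3), (if (i : ℕ) < n + 1 then (1:ℝ) else -1) * (x i * y i) := by
  rw [lieForm, Matrix.toBilin'_apply]
  refine Finset.sum_congr rfl fun i _ => ?_
  rw [Finset.sum_eq_single i]
  · simp only [Matrix.diagonal_apply_eq]; ring
  · intro j _ hj
    simp [Matrix.diagonal_apply_ne' _ hj]
  · simp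

lemma lieForm_comm (n : ℕ) (x y : Fin (n + 3) → ℝ) : lieForm n x y = lieForm n y x := by
  simp only [lieForm_apply]
  exact Finset.sum_congr rfl fun i _ => by ring

lemma lieForm_nonneg (n : ℕ) (x : Fin (n + 3) → ℝ)
    (h1 : x ⟨n + 1, by omega⟩ = 0) (h2 : x ⟨n + 2, by omega⟩ = 0) :
    0 ≤ lieForm n x x := by
  rw [lieForm_apply]
  refine Finset.sum_nonneg fun i _ => ?_
  by_cases hi : (i : ℕ) < n + 1
  · simp only [hi, if_true, one_mul]; exact mul_self_nonneg _
  · have hx : x i = 0 := by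
      have hlt := i.isLt
      rcases Nat.lt_or_ge (i : ℕ) (n + 2) with h | h
      · have : i = (⟨n + 1, by omega⟩ : Fin (n + 3)) := Fin.ext (by simp; omega)
        rw [this]; exact h1
      · have : i = (⟨n + 2, by omega⟩ : Fin (n + 3)) := Fin.ext (by simp; omega)
        rw [this]; exact h2
    simp [hx]

lemma range_snoc {k : ℕ} {V : Type*} (X : Fin k → V) (S : V) :
    Set.range (Fin.snoc X S : Fin (k + 1) → V) = insert S (Set.range X) := by
  ext y
  simp only [Set.mem_range, Set.mem_insert_iff]
  constructor
  · rintro ⟨i, rfl⟩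
    induction i using Fin.lastCases with
    | last => left; simp
    | cast j => right; exact ⟨j, by simp⟩
  · rintro (rfl | ⟨j, rfl⟩)
    · exact ⟨Fin.last k, by simp⟩
    · exact ⟨j.castSucc, by simp⟩

lemma key {n k : ℕ} (Z : Fin (k + 1) → (Fin (n + 3) → ℝ))
    (hdet : (Matrix.of fun i j => lieForm n (Z i) (Z j)).det < 0)
    (v : Fin (n + 3) → ℝ) (c : Fin (k + 1) → ℝ) (hc : ∑ i, c i • Z i = v)
    (hvne : v ≠ 0)
    (hSv : lieForm n (Z (Fin.last k)) v = 0)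
    (hSS : lieForm n (Z (Fin.last k)) (Z (Fin.last k)) < 0)
    (hvv : lieForm n v v ≤ 0) : False := by
  set G : Matrix (Fin (k + 1)) (Fin (k + 1)) ℝ :=
    Matrix.of fun i j => lieForm n (Z i) (Z j) with hGdef
  have hG : G.IsHermitian := by
    refine Matrix.ext fun i j => ?_
    simp [Matrix.conjTranspose_apply, hGdef, lieForm_comm]
  set U : Matrix (Fin (k + 1)) (Fin (k + 1)) ℝ := (hG.eigenvectorUnitary : Matrix (Fin (k + 1)) (Fin (k + 1)) ℝ) with hUdef
  set lam : Fin (k + 1) → ℝ := hG.eigenvalues with hlamdef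
  have hUmem := hG.eigenvectorUnitary.2
  rw [Unitary.mem_iff] at hUmem
  obtain ⟨hU1, hU2⟩ := hUmem
  have hspec : G = U * Matrix.diagonal lam * star U := by
    have h := hG.spectral_theorem
    rw [Unitary.conjStarAlgAut_apply] at h
    exact h
  have hBsum : ∀ cc dd : Fin (k + 1) → ℝ,
      lieForm n (∑ i, cc i • Z i) (∑ i, dd i • Z i) = cc ⬝ᵥ (G *ᵥ dd) := by
    intro cc dd
    simp only [_root_.map_sum, _root_.map_smul, LinearMap.sum_apply, LinearMap.smul_apply,
      smul_eq_mul, dotProduct, Matrix.mulVec, hGdef, Matrix.of_apply]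
    simp_rw [Finset.mul_sum]
    rw [Finset.sum_comm]
    exact Finset.sum_congr rfl fun i _ => Finset.sum_congr rfl fun j _ => by ring
  have hkey : ∀ y z : Fin (k + 1) → ℝ,
      lieForm n (∑ i, (U *ᵥ y) i • Z i) (∑ i, (U *ᵥ z) i • Z i) = ∑ i, lam i * (y i * z i) := by
    intro y z
    rw [hBsum, hspec]
    rw [← Matrix.mulVec_mulVec, ← Matrix.mulVec_mulVec, Matrix.mulVec_mulVec z (star U) U,
      hU1, Matrix.one_mulVec, Matrix.dotProduct_mulVec (U *ᵥ y) U]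
    have : (U *ᵥ y) ᵥ* U = y := by
      rw [← Matrix.mulVec_transpose, Matrix.mulVec_mulVec]
      rw [show Uᵀ = star U from (Matrix.conjTranspose_eq_transpose_of_trivial U).symm, hU1,
        Matrix.one_mulVec]
    rw [this]
    simp only [dotProduct, Matrix.mulVec_diagonal]
    exact Finset.sum_congr rfl fun i _ => by ring
  classical
  -- coordinates of v and S in the eigenbasis
  set a : Fin (k + 1) → ℝ := star U *ᵥ c with hadef
  set b : Fin (k + 1) → ℝ := star U *ᵥ Pi.single (Fin.last k) 1 with hbdef
  have hUa : U *ᵥ a = c := by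
    rw [hadef, Matrix.mulVec_mulVec, hU2, Matrix.one_mulVec]
  have hUb : U *ᵥ b = Pi.single (Fin.last k) 1 := by
    rw [hbdef, Matrix.mulVec_mulVec, hU2, Matrix.one_mulVec]
  have hsingle : ∑ i, (Pi.single (Fin.last k) 1 : Fin (k + 1) → ℝ) i • Z i = Z (Fin.last k) := by
    rw [Finset.sum_eq_single (Fin.last k)]
    · simp
    · intro i _ hi; rw [Pi.single_eq_of_ne hi, zero_smul]
    · simp
  have haa : ∑ i, lam i * (a i * a i) = lieForm n v v := by
    have h := hkey a a; rw [hUa, hc] at h; exact h.symm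
  have hab : ∑ i, lam i * (a i * b i) = 0 := by
    have h := hkey a b; rw [hUa, hUb, hc, hsingle] at h
    rw [← h, lieForm_comm]; exact hSv
  have hbb : ∑ i, lam i * (b i * b i) < 0 := by
    have h := hkey b b; rw [hUb, hsingle] at h; rw [← h]; exact hSS
  have ha0 : a ≠ 0 := by
    intro h0
    have hc0 : c = 0 := by rw [← hUa, h0, Matrix.mulVec_zero]
    apply hvne; rw [← hc, hc0]; simp
  -- determinant and eigenvalues
  have hprod : ∏ i, lam i < 0 := by
    have h := hG.det_eq_prod_eigenvalues
    rw [h] at hdet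
    simpa using hdet
  have hlam0 : ∀ i, lam i ≠ 0 := by
    intro i hi
    have h0 := Finset.prod_eq_zero (Finset.mem_univ i) hi
    rw [h0] at hprod; exact lt_irrefl 0 hprod
  clear hU1 hU2 hspec hBsum hUa hUb hadef hbdef hsingle hc hSv hSS hdet
  clear_value a b lam U G
  clear hGdef hUdef hlamdef
  set s : Finset (Fin (k + 1)) := Finset.univ.filter (fun i => lam i < 0) with hsdef
  -- at most 2 negative eigenvalues
  have hcard2 : s.card ≤ 2 := by
    let E : (↥s → ℝ) →ₗ[ℝ] (Fin (k + 1) → ℝ) :=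
      { toFun := fun f i => if h : i ∈ s then f ⟨i, h⟩ else 0
        map_add' := by intro f g; funext i; by_cases h : i ∈ s <;> simp [h]
        map_smul' := by intro r f; funext i; by_cases h : i ∈ s <;> simp [h] }
    let Φ : (Fin (k + 1) → ℝ) →ₗ[ℝ] (Fin (n + 3) → ℝ) :=
      { toFun := fun y => ∑ i, (U *ᵥ y) i • Z i
        map_add' := by
          intro y z; simp [Matrix.mulVec_add, add_smul, Finset.sum_add_distrib]
        map_smul' := by
          intro r y; simp [Matrix.mulVec_smul, smul_smul, Finset.smul_sum] }
    let P : (Fin (n + 3) → ℝ) →ₗ[ℝ] (Fin 2 → ℝ) :=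
      LinearMap.funLeft ℝ ℝ (fun j : Fin 2 => (⟨n + 1 + (j : ℕ), by omega⟩ : Fin (n + 3)))
    have hinj : Function.Injective (P ∘ₗ Φ ∘ₗ E) := by
      rw [← LinearMap.ker_eq_bot, LinearMap.ker_eq_bot']
      intro f hf
      set u : Fin (n + 3) → ℝ := ∑ i, (U *ᵥ (E f)) i • Z i with hudef
      have h1 : u ⟨n + 1, by omega⟩ = 0 := by
        have := congrFun hf 0
        simpa [P, Φ, LinearMap.funLeft, hudef] using this
      have h2 : u ⟨n + 2, by omega⟩ = 0 := by
        have := congrFun hf 1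
        have h' : u ⟨n + 1 + 1, by omega⟩ = 0 := by
          simpa [P, Φ, LinearMap.funLeft, hudef] using this
        simpa [show n + 1 + 1 = n + 2 by omega] using h'
      have hge : 0 ≤ lieForm n u u := lieForm_nonneg n u h1 h2
      have hval : lieForm n u u = ∑ i, lam i * (E f i * E f i) := hkey (E f) (E f)
      have hterm : ∀ i, lam i * (E f i * E f i) ≤ 0 := by
        intro i; by_cases h : i ∈ s
        · have hl : lam i < 0 := (Finset.mem_filter.mp h).2
          have := mul_self_nonneg (E f i)
          nlinarith
        · have hz : E f i = 0 := dif_neg h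
          rw [hz]; simp
      have hsum0 : ∑ i, lam i * (E f i * E f i) = 0 :=
        le_antisymm (Finset.sum_nonpos fun i _ => hterm i) (hval ▸ hge)
      funext j
      obtain ⟨j, hj⟩ := j
      have hz := (Finset.sum_eq_zero_iff_of_nonpos (fun i _ => hterm i)).mp hsum0 j
        (Finset.mem_univ j)
      have hEj : E f j = f ⟨j, hj⟩ := dif_pos hj
      have hlj : lam j < 0 := (Finset.mem_filter.mp hj).2
      rw [hEj] at hz
      rcases mul_eq_zero.mp hz with h | h
      · exact absurd h hlj.ne
      · exact mul_self_eq_zero.mp h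
    have hle := LinearMap.finrank_le_finrank_of_injective hinj
    rw [Module.finrank_pi, Module.finrank_pi, Fintype.card_coe, Fintype.card_fin] at hle
    exact hle
  -- the number of negative eigenvalues is odd
  have hodd : Odd s.card := by
    by_contra he
    rw [Nat.not_odd_iff_even] at he
    have hsplit := Finset.prod_filter_mul_prod_filter_not Finset.univ (fun i => lam i < 0) lam
    have hpos2 : 0 < ∏ i ∈ Finset.univ.filter (fun i => ¬ lam i < 0), lam i := by
      refine Finset.prod_pos fun i hi => ?_
      have h := (Finset.mem_filter.mp hi).2
      exact lt_of_le_of_ne (not_lt.mp h) (Ne.symm (hlam0 i))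
    have hpos1 : 0 < ∏ i ∈ s, lam i := by
      have hrw : ∏ i ∈ s, lam i = (-1) ^ s.card * ∏ i ∈ s, (-lam i) := by
        rw [show (∏ i ∈ s, lam i) = ∏ i ∈ s, ((-1) * (-lam i)) from
          Finset.prod_congr rfl fun i _ => by ring, Finset.prod_mul_distrib,
          Finset.prod_const]
      rw [hrw, he.neg_one_pow, one_mul]
      refine Finset.prod_pos fun i hi => ?_
      have := (Finset.mem_filter.mp hi).2
      linarith
    rw [← hsplit] at hprod
    exact absurd hprod (not_lt.mpr (mul_pos hpos1 hpos2).le)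
  have hcard1 : s.card = 1 := by
    rcases hodd with ⟨m, hm⟩; omega
  obtain ⟨i0, hi0⟩ := Finset.card_eq_one.mp hcard1
  have hlneg : lam i0 < 0 := by
    have : i0 ∈ s := hi0 ▸ Finset.mem_singleton_self i0
    exact (Finset.mem_filter.mp this).2
  have hlpos : ∀ j, j ≠ i0 → 0 < lam j := by
    intro j hj
    have hns : j ∉ s := by rw [hi0]; simp [hj]
    have h2 : ¬ lam j < 0 := fun hl => hns (Finset.mem_filter.mpr ⟨Finset.mem_univ j, hl⟩)
    exact lt_of_le_of_ne (not_lt.mp h2) (Ne.symm (hlam0 j))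
  -- final Cauchy-Schwarz contradiction
  set t : Finset (Fin (k + 1)) := Finset.univ.erase i0 with htdef
  have hsplit : ∀ f : Fin (k + 1) → ℝ, ∑ i, f i = f i0 + ∑ i ∈ t, f i := fun f =>
    (Finset.add_sum_erase _ f (Finset.mem_univ i0)).symm
  have hμ : 0 < -lam i0 := neg_pos.mpr hlneg
  have hA : ∑ i ∈ t, lam i * (a i * a i) ≤ (-lam i0) * (a i0 * a i0) := by
    have h' := hsplit (fun i => lam i * (a i * a i))
    rw [haa] at h'
    linarith [hvv, h']
  have hB : ∑ i ∈ t, lam i * (b i * b i) < (-lam i0) * (b i0 * b i0) := by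
    have h' := hsplit (fun i => lam i * (b i * b i))
    linarith [hbb, h']
  have hAB : ∑ i ∈ t, lam i * (a i * b i) = (-lam i0) * (a i0 * b i0) := by
    have := hsplit (fun i => lam i * (a i * b i))
    rw [hab] at this
    linarith [this]
  have hA0 : 0 ≤ ∑ i ∈ t, lam i * (a i * a i) := by
    refine Finset.sum_nonneg fun i hi => ?_
    have hi' : i ≠ i0 := (Finset.mem_erase.mp hi).1
    have := hlpos i hi'
    nlinarith [mul_self_nonneg (a i)]
  have hB0 : 0 ≤ ∑ i ∈ t, lam i * (b i * b i) := by
    refine Finset.sum_nonneg fun i hi => ?_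
    have hi' : i ≠ i0 := (Finset.mem_erase.mp hi).1
    have := hlpos i hi'
    nlinarith [mul_self_nonneg (b i)]
  have hCS : (∑ i ∈ t, lam i * (a i * b i)) ^ 2 ≤
      (∑ i ∈ t, lam i * (a i * a i)) * (∑ i ∈ t, lam i * (b i * b i)) := by
    have h := Finset.sum_mul_sq_le_sq_mul_sq t (fun i => Real.sqrt (lam i) * a i)
      (fun i => Real.sqrt (lam i) * b i)
    have e1 : ∀ i ∈ t, (Real.sqrt (lam i) * a i) * (Real.sqrt (lam i) * b i)
        = lam i * (a i * b i) := by
      intro i hi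
      have hp : (0:ℝ) ≤ lam i := (hlpos i (Finset.mem_erase.mp hi).1).le
      have hs := Real.mul_self_sqrt hp
      linear_combination (a i * b i) * hs
    have e2 : ∀ i ∈ t, (Real.sqrt (lam i) * a i) ^ 2 = lam i * (a i * a i) := by
      intro i hi
      have hp : (0:ℝ) ≤ lam i := (hlpos i (Finset.mem_erase.mp hi).1).le
      have hs := Real.mul_self_sqrt hp
      linear_combination (a i * a i) * hs
    have e3 : ∀ i ∈ t, (Real.sqrt (lam i) * b i) ^ 2 = lam i * (b i * b i) := by
      intro i hi
      have hp : (0:ℝ) ≤ lam i := (hlpos i (Finset.mem_erase.mp hi).1).le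
      have hs := Real.mul_self_sqrt hp
      linear_combination (b i * b i) * hs
    have s1 := Finset.sum_congr rfl e1
    have s2 := Finset.sum_congr rfl e2
    have s3 := Finset.sum_congr rfl e3
    rw [← s1, ← s2, ← s3]
    exact h
  by_cases hα : a i0 = 0
  · have hA'0 : ∑ i ∈ t, lam i * (a i * a i) = 0 := by
      apply le_antisymm _ hA0
      rw [hα] at hA; simpa using hA
    have hzero : ∀ i ∈ t, lam i * (a i * a i) = 0 := by
      intro i hi
      refine (Finset.sum_eq_zero_iff_of_nonneg fun i hi => ?_).mp hA'0 i hi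
      have := hlpos i (Finset.mem_erase.mp hi).1
      nlinarith [mul_self_nonneg (a i)]
    apply ha0
    funext i
    by_cases hi : i = i0
    · rw [hi]; exact hα
    · have h := hzero i (Finset.mem_erase.mpr ⟨hi, Finset.mem_univ i⟩)
      rcases mul_eq_zero.mp h with h' | h'
      · exact absurd h' (hlpos i hi).ne'
      · exact mul_self_eq_zero.mp h'
  · have hβ : b i0 ≠ 0 := by
      intro h0
      rw [h0] at hB
      simp at hB
      linarith
    have h1 : ((-lam i0) * (a i0 * b i0)) ^ 2 ≤
        (∑ i ∈ t, lam i * (a i * a i)) * (∑ i ∈ t, lam i * (b i * b i)) := hAB ▸ hCS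
    have h2 : (∑ i ∈ t, lam i * (a i * a i)) * (∑ i ∈ t, lam i * (b i * b i)) ≤
        ((-lam i0) * (a i0 * a i0)) * (∑ i ∈ t, lam i * (b i * b i)) :=
      mul_le_mul_of_nonneg_right hA hB0
    have hμα : 0 < (-lam i0) * (a i0 * a i0) := by
      have h' : 0 < a i0 * a i0 := by
        rcases (mul_self_nonneg (a i0)).lt_or_eq with h | h
        · exact h
        · exact absurd (mul_self_eq_zero.mp h.symm) hα
      exact mul_pos hμ h'
    have h3 : ((-lam i0) * (a i0 * a i0)) * (∑ i ∈ t, lam i * (b i * b i)) <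
        ((-lam i0) * (a i0 * a i0)) * ((-lam i0) * (b i0 * b i0)) := mul_lt_mul_of_pos_left hB hμα
    have hfinal : ((-lam i0) * (a i0 * b i0)) ^ 2 < ((-lam i0) * (a i0 * a i0)) * ((-lam i0) * (b i0 * b i0)) :=
      lt_of_le_of_lt (le_trans h1 h2) h3
    have heq : ((-lam i0) * (a i0 * a i0)) * ((-lam i0) * (b i0 * b i0)) = ((-lam i0) * (a i0 * b i0)) ^ 2 := by ring
    rw [heq] at hfinal
    exact lt_irrefl _ hfinal

end Stmt11Aux

/-- Let `X_1,...,X_k, S` be linearly independent with Gram determinant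
`Δ(X,S) < 0` for the Lie form, and `B(S,S) < 0`. Then every nonzero vector of
`span(X,S) ∩ S^⊥` has positive square, and `span(X,S) = (span(X,S) ∩ S^⊥) ⊕ ⟨S⟩`. -/
theorem stmt_11 {n k : ℕ} (X : Fin k → (Fin (n + 3) → ℝ)) (S : Fin (n + 3) → ℝ)
    (Z : Fin (k + 1) → (Fin (n + 3) → ℝ)) (hZ : Z = Fin.snoc X S)
    (hind : LinearIndependent ℝ Z)
    (hdet : (Matrix.of fun i j => lieForm n (Z i) (Z j)).det < 0)
    (hSS : lieForm n S S < 0) :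
    (∀ v ∈ Submodule.span ℝ (insert S (Set.range X)) ⊓ LinearMap.ker (lieForm n S),
      v ≠ 0 → 0 < lieForm n v v) ∧
    (Submodule.span ℝ (insert S (Set.range X)) ⊓ LinearMap.ker (lieForm n S)) ⊔
        Submodule.span ℝ {S} = Submodule.span ℝ (insert S (Set.range X)) ∧
    (Submodule.span ℝ (insert S (Set.range X)) ⊓ LinearMap.ker (lieForm n S)) ⊓
        Submodule.span ℝ {S} = ⊥ := by
  classical
  have hrange : insert S (Set.range X) = Set.range Z := by
    rw [hZ, Stmt11Aux.range_snoc]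
  have hZlast : Z (Fin.last k) = S := by rw [hZ]; simp
  have hSS' : lieForm n (Z (Fin.last k)) (Z (Fin.last k)) < 0 := by rw [hZlast]; exact hSS
  refine ⟨?_, ?_, ?_⟩
  · intro v hv hvne
    obtain ⟨hv1, hv2⟩ := Submodule.mem_inf.mp hv
    rw [hrange] at hv1
    obtain ⟨c, hc⟩ := (Submodule.mem_span_range_iff_exists_fun ℝ).mp hv1
    by_contra hlt
    have hvv : lieForm n v v ≤ 0 := not_lt.mp hlt
    have hSv : lieForm n (Z (Fin.last k)) v = 0 := by
      rw [hZlast]; exact LinearMap.mem_ker.mp hv2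
    exact Stmt11Aux.key Z hdet v c hc hvne hSv hSS' hvv
  · apply le_antisymm
    · refine sup_le inf_le_left (Submodule.span_mono ?_)
      exact Set.singleton_subset_iff.mpr (Set.mem_insert _ _)
    · rw [Submodule.span_le]
      intro y hy
      rcases hy with rfl | ⟨i, rfl⟩
      · exact Submodule.mem_sup_right (Submodule.mem_span_singleton_self y)
      · have hXmem : X i ∈ Submodule.span ℝ (insert S (Set.range X)) :=
          Submodule.subset_span (Set.mem_insert_of_mem _ (Set.mem_range_self i))
        have hSmem : S ∈ Submodule.span ℝ (insert S (Set.range X)) :=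
          Submodule.subset_span (Set.mem_insert _ _)
        set cX : ℝ := lieForm n S (X i) / lieForm n S S with hcX
        have hw : X i - cX • S ∈
            Submodule.span ℝ (insert S (Set.range X)) ⊓ LinearMap.ker (lieForm n S) := by
          refine Submodule.mem_inf.mpr ⟨sub_mem hXmem (Submodule.smul_mem _ _ hSmem), ?_⟩
          rw [LinearMap.mem_ker, map_sub, map_smul, smul_eq_mul, hcX,
            div_mul_cancel₀ _ hSS.ne, sub_self]
        have hXi : X i = (X i - cX • S) + cX • S := by abel
        rw [hXi]
        exact Submodule.add_mem _ (Submodule.mem_sup_left hw)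
          (Submodule.mem_sup_right
            (Submodule.smul_mem _ _ (Submodule.mem_span_singleton_self S)))
  · rw [eq_bot_iff]
    intro y hy
    obtain ⟨hy1, hy2⟩ := Submodule.mem_inf.mp hy
    obtain ⟨_, hy1b⟩ := Submodule.mem_inf.mp hy1
    obtain ⟨r, rfl⟩ := Submodule.mem_span_singleton.mp hy2
    have h0 := LinearMap.mem_ker.mp hy1b
    rw [map_smul, smul_eq_mul] at h0
    rcases mul_eq_zero.mp h0 with hr | hr
    · rw [hr, zero_smul]; exact Submodule.zero_mem ⊥
    · exact absurd hr hSS.ne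
end

section
/- Let X_1,...,X_k, S be linearly independent with Δ(X,S) < 0 and B(S,S) = 0 (S isotropic). Then every nonzero X ∈ span(X_1,...,X_k,S) ∩ S^⊥ that is not a multiple of S satisfies B(X,X) > 0, and Δ(X,S) := B(X,X)B(S,S) − B(X,S)² = 0 for all such X (i.e. X admits no projection onto the isotropic cone along S other than S itself). -/
lemma lie_apply (n : ℕ) (x y : Fin (n+3) → ℝ) :
    lieForm n x y = ∑ i : Fin (n+3), (if (i : ℕ) < n + 1 then x i * y i else -(x i * y i)) := by
  rw [lieForm, Matrix.toBilin'_apply]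
  refine Finset.sum_congr rfl fun i _ => ?_
  rw [Finset.sum_eq_single i]
  · simp only [Matrix.diagonal_apply_eq]; split <;> ring
  · intro j _ hj; simp [Matrix.diagonal_apply_ne' _ hj]
  · simp

lemma lie_comm (n : ℕ) (x y : Fin (n+3) → ℝ) : lieForm n x y = lieForm n y x := by
  rw [lie_apply, lie_apply]
  exact Finset.sum_congr rfl fun i _ => by split <;> ring

lemma lie_self_nonneg (n : ℕ) (x : Fin (n+3) → ℝ)
    (h1 : x ⟨n+1, by omega⟩ = 0) (h2 : x ⟨n+2, by omega⟩ = 0) :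
    0 ≤ lieForm n x x ∧ (lieForm n x x = 0 → x = 0) := by
  have hx0 : ∀ i : Fin (n+3), ¬ ((i : ℕ) < n + 1) → x i = 0 := by
    intro i hi
    have : (i : ℕ) = n + 1 ∨ (i : ℕ) = n + 2 := by have := i.isLt; omega
    rcases this with h | h
    · have : i = ⟨n+1, by omega⟩ := Fin.ext h
      rw [this]; exact h1
    · have : i = ⟨n+2, by omega⟩ := Fin.ext h
      rw [this]; exact h2
  have hterm : ∀ i : Fin (n+3), 0 ≤ (if (i : ℕ) < n + 1 then x i * x i else -(x i * x i)) := by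
    intro i
    by_cases h : (i : ℕ) < n + 1
    · rw [if_pos h]; exact mul_self_nonneg _
    · rw [if_neg h, hx0 i h]; simp
  rw [lie_apply]
  constructor
  · exact Finset.sum_nonneg fun i _ => hterm i
  · intro hsum
    have := (Finset.sum_eq_zero_iff_of_nonneg fun i _ => hterm i).mp hsum
    funext i
    have hi := this i (Finset.mem_univ i)
    by_cases h : (i : ℕ) < n + 1
    · rw [if_pos h] at hi; exact mul_self_eq_zero.mp hi
    · exact hx0 i h



lemma no_three (n : ℕ) (a b c : Fin (n+3) → ℝ)
    (ha : lieForm n a a ≤ 0) (hb : lieForm n b b ≤ 0) (hc : lieForm n c c ≤ 0)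
    (hab : lieForm n a b = 0) (hac : lieForm n a c = 0) (hbc : lieForm n b c = 0)
    (hind : ∀ α β γ : ℝ, α • a + β • b + γ • c = 0 → α = 0 ∧ β = 0 ∧ γ = 0) :
    False := by
  have hnli : ¬ LinearIndependent ℝ
      ![(fun j : Fin 2 => a ⟨n+1+j, by omega⟩), (fun j => b ⟨n+1+j, by omega⟩),
        (fun j => c ⟨n+1+j, by omega⟩)] := by
    intro h
    have := h.fintype_card_le_finrank
    simp [Module.finrank_pi] at this
  obtain ⟨g, hg, i, hgi⟩ := Fintype.not_linearIndependent_iff.mp hnli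
  rw [Fin.sum_univ_three] at hg
  have h0 := congrFun hg 0
  have h1 := congrFun hg 1
  simp at h0 h1
  have hx1 : (g 0 • a + g 1 • b + g 2 • c) ⟨n+1, by omega⟩ = 0 := by
    simpa using h0
  have hx2 : (g 0 • a + g 1 • b + g 2 • c) ⟨n+2, by omega⟩ = 0 := by
    simpa using h1
  have hq : lieForm n (g 0 • a + g 1 • b + g 2 • c) (g 0 • a + g 1 • b + g 2 • c)
      = g 0 ^ 2 * lieForm n a a + g 1 ^ 2 * lieForm n b b + g 2 ^ 2 * lieForm n c c := by
    have hba : lieForm n b a = 0 := (lie_comm n a b) ▸ hab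
    have hca : lieForm n c a = 0 := (lie_comm n a c) ▸ hac
    have hcb : lieForm n c b = 0 := (lie_comm n b c) ▸ hbc
    simp only [map_add, map_smul, LinearMap.add_apply, LinearMap.smul_apply,
      smul_eq_mul, hab, hac, hbc, hba, hca, hcb]
    ring
  have hqle : lieForm n (g 0 • a + g 1 • b + g 2 • c) (g 0 • a + g 1 • b + g 2 • c) ≤ 0 := by
    rw [hq]
    nlinarith [sq_nonneg (g 0), sq_nonneg (g 1), sq_nonneg (g 2)]
  obtain ⟨hge, h0'⟩ := lie_self_nonneg n (g 0 • a + g 1 • b + g 2 • c) hx1 hx2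
  obtain ⟨e1, e2, e3⟩ := hind (g 0) (g 1) (g 2) (h0' (le_antisymm hqle hge))
  fin_cases i
  · exact hgi e1
  · exact hgi e2
  · exact hgi e3

open Matrix in
lemma dot_sum {m ι : Type*} [Fintype m] (c : m → ℝ) (s : Finset ι) (f : ι → m → ℝ) :
    c ⬝ᵥ (∑ i ∈ s, f i) = ∑ i ∈ s, c ⬝ᵥ f i := by
  simp only [dotProduct, Finset.sum_apply, Finset.mul_sum]
  exact Finset.sum_comm

open Matrix in
/-- Let `X_1,...,X_k, S` be linearly independent with Gram determinant
`Δ(X,S) < 0` and `S` isotropic (`B(S,S) = 0`). Then every vector `v` of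
`span(X,S) ∩ S^⊥` which is not a scalar multiple of `S` satisfies `B(v,v) > 0` and
`B(v,v)B(S,S) − B(v,S)² = 0` (so `v` admits no projection onto the isotropic cone along
`S` other than `S` itself). -/
theorem stmt_19 {n k : ℕ} (X : Fin k → (Fin (n + 3) → ℝ)) (S : Fin (n + 3) → ℝ)
    (Z : Fin (k + 1) → (Fin (n + 3) → ℝ)) (hZ : Z = Fin.snoc X S)
    (hind : LinearIndependent ℝ Z)
    (hdet : (Matrix.of fun i j => lieForm n (Z i) (Z j)).det < 0)
    (hSS : lieForm n S S = 0) :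
    ∀ v ∈ Submodule.span ℝ (insert S (Set.range X)),
      lieForm n S v = 0 → (∀ c : ℝ, v ≠ c • S) →
      0 < lieForm n v v ∧
      lieForm n v v * lieForm n S S - (lieForm n v S) ^ 2 = 0 := by
  intro v hv hSv hvS
  have hvS0 : lieForm n v S = 0 := (lie_comm n S v) ▸ hSv
  refine ⟨?_, by rw [hSS, hvS0]; ring⟩
  by_contra hpos
  push_neg at hpos
  -- coefficients of v
  have hrange : insert S (Set.range X) = Set.range Z := by
    rw [hZ]
    ext y
    constructor
    · rintro (rfl | ⟨i, rfl⟩)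
      · exact ⟨Fin.last k, Fin.snoc_last _ _⟩
      · exact ⟨i.castSucc, Fin.snoc_castSucc _ _ _⟩
    · rintro ⟨i, rfl⟩
      induction i using Fin.lastCases with
      | last => rw [Fin.snoc_last]; exact Set.mem_insert _ _
      | cast i => rw [Fin.snoc_castSucc]; exact Set.mem_insert_of_mem _ ⟨i, rfl⟩
  rw [hrange] at hv
  obtain ⟨cv, hcv⟩ := (Submodule.mem_span_range_iff_exists_fun ℝ).mp hv
  set G : Matrix (Fin (k+1)) (Fin (k+1)) ℝ :=
    Matrix.of fun i j => lieForm n (Z i) (Z j) with hGdef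
  have hindc : ∀ g : Fin (k+1) → ℝ, ∑ i, g i • Z i = 0 → ∀ i, g i = 0 := by
    intro g hg
    exact Fintype.linearIndependent_iff.mp hind g hg
  -- key1
  have key1 : ∀ c d : Fin (k+1) → ℝ,
      lieForm n (∑ i, c i • Z i) (∑ j, d j • Z j) = c ⬝ᵥ G *ᵥ d := by
    intro c d
    simp only [map_sum, _root_.map_smul, LinearMap.sum_apply, LinearMap.smul_apply,
      smul_eq_mul, dotProduct, Matrix.mulVec, Finset.mul_sum, hGdef, Matrix.of_apply]
    rw [Finset.sum_comm]
    refine Finset.sum_congr rfl fun i _ => Finset.sum_congr rfl fun j _ => by ring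
  -- S coefficients
  set cS : Fin (k+1) → ℝ := Pi.single (Fin.last k) 1 with hcSdef
  have hcS : ∑ i, cS i • Z i = S := by
    rw [Finset.sum_eq_single (Fin.last k)]
    · simp [hcSdef, hZ, Fin.snoc_last]
    · intro i _ hi; simp [hcSdef, Pi.single_apply, hi]
    · simp
  -- spectral data
  have hG : G.IsHermitian := by
    ext i j
    simp [Matrix.conjTranspose_apply, hGdef, lie_comm n (Z i) (Z j)]
  set μ : Fin (k+1) → ℝ := hG.eigenvalues with hμdef
  set w : Fin (k+1) → (Fin (k+1) → ℝ) := fun i => ⇑(hG.eigenvectorBasis i) with hwdef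
  have hGw : ∀ i, G *ᵥ w i = μ i • w i := fun i => hG.mulVec_eigenvectorBasis i
  have horth : ∀ i j, w i ⬝ᵥ w j = if i = j then 1 else 0 := by
    intro i j
    have := orthonormal_iff_ite.mp hG.eigenvectorBasis.orthonormal i j
    simpa [PiLp.inner_apply, dotProduct, RCLike.inner_apply, hwdef, mul_comm] using this
  have hexp : ∀ c : Fin (k+1) → ℝ, c = ∑ i, (w i ⬝ᵥ c) • w i := by
    intro c
    have := hG.eigenvectorBasis.sum_repr' (WithLp.toLp 2 c)
    have h2 : ∀ i, (inner ℝ (hG.eigenvectorBasis i) (WithLp.toLp 2 c) : ℝ)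
        = w i ⬝ᵥ c := by
      intro i
      simp [PiLp.inner_apply, dotProduct, RCLike.inner_apply, hwdef, mul_comm]
    simp_rw [h2] at this
    have h3 := congrArg WithLp.ofLp this
    simp only [WithLp.ofLp_sum, WithLp.ofLp_smul, WithLp.ofLp_toLp] at h3
    exact h3.symm
  have hdet2 : ∏ i, μ i < 0 := by
    have := hG.det_eq_prod_eigenvalues
    simp only [RCLike.ofReal_real_eq_id, id] at this
    rw [this] at hdet
    simpa using hdet
  have hμne : ∀ i, μ i ≠ 0 := by
    intro i
    have : ∏ j, μ j ≠ 0 := ne_of_lt hdet2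
    exact Finset.prod_ne_zero_iff.mp this i (Finset.mem_univ i)
  -- no three negative eigenvalues
  have hno3 : ∀ i j l : Fin (k+1), i ≠ j → i ≠ l → j ≠ l →
      μ i < 0 → μ j < 0 → μ l < 0 → False := by
    intro i j l hij hil hjl hμi hμj hμl
    have hBij : ∀ p q : Fin (k+1),
        lieForm n (∑ x, w p x • Z x) (∑ x, w q x • Z x) = μ q * (w p ⬝ᵥ w q) := by
      intro p q
      rw [key1, hGw q, dotProduct_smul, smul_eq_mul]
    refine no_three n (∑ x, w i x • Z x) (∑ x, w j x • Z x) (∑ x, w l x • Z x)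
      ?_ ?_ ?_ ?_ ?_ ?_ ?_
    · rw [hBij i i, horth]; simp [le_of_lt hμi]
    · rw [hBij j j, horth]; simp [le_of_lt hμj]
    · rw [hBij l l, horth]; simp [le_of_lt hμl]
    · rw [hBij i j, horth, if_neg hij]; ring
    · rw [hBij i l, horth, if_neg hil]; ring
    · rw [hBij j l, horth, if_neg hjl]; ring
    · intro α β γ hrel
      have hsum : ∑ x, (α * w i x + β * w j x + γ * w l x) • Z x = 0 := by
        rw [← hrel]
        rw [Finset.smul_sum, Finset.smul_sum, Finset.smul_sum, ← Finset.sum_add_distrib,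
          ← Finset.sum_add_distrib]
        refine Finset.sum_congr rfl fun x _ => ?_
        simp [smul_smul, add_smul]
      have hz : ∀ x, α * w i x + β * w j x + γ * w l x = 0 := hindc _ hsum
      have hfun : (α • w i + β • w j + γ • w l) = (0 : Fin (k+1) → ℝ) := by
        funext x; simpa using hz x
      have hdot : ∀ p : Fin (k+1), w p ⬝ᵥ (α • w i + β • w j + γ • w l) = 0 := by
        intro p; rw [hfun]; simp [dotProduct]
      have di := hdot i
      have dj := hdot j
      have dl := hdot l
      simp only [dotProduct_add, dotProduct_smul, horth, smul_eq_mul,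
        if_pos, if_neg hij, if_neg hil, if_neg hjl, if_neg (Ne.symm hij),
        if_neg (Ne.symm hil), if_neg (Ne.symm hjl)] at di dj dl
      simp at di dj dl
      exact ⟨di, dj, dl⟩
  -- eigenvalue structure
  obtain ⟨i₀, hi₀⟩ : ∃ i, μ i < 0 := by
    by_contra h
    push_neg at h
    have : 0 < ∏ i, μ i :=
      Finset.prod_pos fun i _ => lt_of_le_of_ne (h i) (Ne.symm (hμne i))
    linarith
  have huniq : ∀ j, μ j < 0 → j = i₀ := by
    intro j hj
    by_contra hne
    by_cases hex : ∃ l, l ≠ i₀ ∧ l ≠ j ∧ μ l < 0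
    · obtain ⟨l, hl1, hl2, hl3⟩ := hex
      exact hno3 i₀ j l (Ne.symm hne) (Ne.symm hl1) (Ne.symm hl2) hi₀ hj hl3
    · push_neg at hex
      have hposl : ∀ l ∈ (Finset.univ.erase i₀).erase j, 0 < μ l := by
        intro l hl
        have hl2 : l ≠ j := Finset.ne_of_mem_erase hl
        have hl1 : l ≠ i₀ := Finset.ne_of_mem_erase (Finset.mem_of_mem_erase hl)
        exact lt_of_le_of_ne (hex l hl1 hl2) (Ne.symm (hμne l))
      have h1 : ∏ l, μ l = μ i₀ * ∏ l ∈ Finset.univ.erase i₀, μ l :=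
        (Finset.mul_prod_erase _ _ (Finset.mem_univ i₀)).symm
      have hjmem : j ∈ Finset.univ.erase i₀ :=
        Finset.mem_erase.mpr ⟨hne, Finset.mem_univ j⟩
      have h2 : ∏ l ∈ Finset.univ.erase i₀, μ l
          = μ j * ∏ l ∈ (Finset.univ.erase i₀).erase j, μ l :=
        (Finset.mul_prod_erase _ _ hjmem).symm
      have h3 : 0 < ∏ l ∈ (Finset.univ.erase i₀).erase j, μ l := Finset.prod_pos hposl
      rw [h1, h2] at hdet2
      nlinarith [mul_pos_of_neg_of_neg hi₀ hj]
  have hμpos : ∀ i, i ≠ i₀ → 0 < μ i := by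
    intro i hi
    rcases (hμne i).lt_or_gt with h | h
    · exact absurd (huniq i h) hi
    · exact h
  -- spectral expansion of the quadratic form
  have key2 : ∀ c : Fin (k+1) → ℝ, c ⬝ᵥ G *ᵥ c = ∑ i, μ i * (w i ⬝ᵥ c)^2 := by
    intro c
    have hmv : G *ᵥ c = ∑ i, ((w i ⬝ᵥ c) * μ i) • w i := by
      conv_lhs => rw [hexp c]
      rw [← Matrix.mulVecLin_apply, map_sum]
      refine Finset.sum_congr rfl fun i _ => ?_
      rw [_root_.map_smul, Matrix.mulVecLin_apply, hGw i, smul_smul]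
    rw [hmv, dot_sum]
    refine Finset.sum_congr rfl fun i _ => ?_
    rw [dotProduct_smul, dotProduct_comm c (w i)]
    simp only [smul_eq_mul]
    ring
  -- positivity on the complement of the negative eigenvector
  have hpos0 : ∀ c : Fin (k+1) → ℝ, w i₀ ⬝ᵥ c = 0 →
      0 ≤ c ⬝ᵥ G *ᵥ c ∧ (c ⬝ᵥ G *ᵥ c = 0 → c = 0) := by
    intro c hc
    rw [key2 c]
    have hterm : ∀ i : Fin (k+1), 0 ≤ μ i * (w i ⬝ᵥ c)^2 := by
      intro i
      by_cases h : i = i₀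
      · subst h; rw [hc]; simp
      · exact mul_nonneg (le_of_lt (hμpos i h)) (sq_nonneg _)
    refine ⟨Finset.sum_nonneg fun i _ => hterm i, fun hz => ?_⟩
    have hall := (Finset.sum_eq_zero_iff_of_nonneg fun i _ => hterm i).mp hz
    have hdots : ∀ i, w i ⬝ᵥ c = 0 := by
      intro i
      by_cases h : i = i₀
      · subst h; exact hc
      · have hi := hall i (Finset.mem_univ i)
        have hμ := hμpos i h
        have hsq : (w i ⬝ᵥ c)^2 = 0 := by
          rcases mul_eq_zero.mp hi with h' | h'
          · exact absurd h' (ne_of_gt hμ)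
          · exact h'
        exact pow_eq_zero_iff (two_ne_zero) |>.mp hsq
    rw [hexp c]
    exact Finset.sum_eq_zero fun i _ => by rw [hdots i]; simp
  -- the contradiction
  set a : ℝ := w i₀ ⬝ᵥ cS with ha_def
  set b : ℝ := w i₀ ⬝ᵥ cv with hb_def
  set dd : Fin (k+1) → ℝ := a • cv - b • cS with hdd_def
  have hddorth : w i₀ ⬝ᵥ dd = 0 := by
    rw [hdd_def]
    rw [dotProduct_sub, dotProduct_smul, dotProduct_smul]
    rw [← ha_def, ← hb_def]
    simp only [smul_eq_mul]
    ring
  have hTd : ∑ i, dd i • Z i = a • v - b • S := by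
    rw [← hcv, ← hcS, Finset.smul_sum, Finset.smul_sum, ← Finset.sum_sub_distrib]
    refine Finset.sum_congr rfl fun i _ => ?_
    simp [hdd_def, sub_smul, smul_smul]
  have hq : dd ⬝ᵥ G *ᵥ dd = a^2 * lieForm n v v := by
    rw [← key1 dd dd, hTd]
    simp only [map_sub, _root_.map_smul, LinearMap.sub_apply, LinearMap.smul_apply,
      smul_eq_mul]
    rw [hvS0, hSv, hSS]
    ring
  have hqle : dd ⬝ᵥ G *ᵥ dd ≤ 0 := by
    rw [hq]
    nlinarith [sq_nonneg a]
  obtain ⟨hge, h0⟩ := hpos0 dd hddorth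
  have hdd0 : dd = 0 := h0 (le_antisymm hqle hge)
  by_cases ha : a = 0
  · have h1 := hpos0 cS (ha_def ▸ ha)
    have hq2 : cS ⬝ᵥ G *ᵥ cS = 0 := by rw [← key1 cS cS, hcS, hSS]
    have hcS0 := h1.2 hq2
    have := congrFun hcS0 (Fin.last k)
    simp [hcSdef] at this
  · rw [hdd_def] at hdd0
    have heq : a • cv = b • cS := sub_eq_zero.mp hdd0
    have hav : a • v = b • S := by
      rw [← hcv, ← hcS, Finset.smul_sum, Finset.smul_sum]
      refine Finset.sum_congr rfl fun i _ => ?_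
      rw [smul_smul, smul_smul, show a * cv i = b * cS i from by simpa using congrFun heq i]
    have hveq : v = (a⁻¹ * b) • S := by
      rw [mul_smul, ← hav, smul_smul, inv_mul_cancel₀ ha, one_smul]
    exact hvS _ hveq
end
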